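/- Let f(x) = (x−1)^6 and g(x) = (x+1)^6, let A, B ∈ GL₆(ℤ) be their companion matrices, and let v = (A⁻¹B − I)(e₆). Then v = (−12, 0, −40, 0, −12, 0), every coordinate of v is divisible by 4, and consequently for every element γ of the subgroup of GL₆(ℤ) generated by A and B, the coefficient of e₆ in γ(v) does not lie in {1, −1, 2, −2}; in particular no γ in this group satisfies the hypotheses of the arithmeticity criterion. -/
import Mathlib


open Matrix Polynomial

/-- The companion matrix of a monic polynomial `p` of degree `n`: it sends
`e_i ↦ e_{i+1}` for `1 ≤ i ≤ n-1` (zero-indexed: column `j` is `e_{j+1}` when `j+1 < n`),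
and `e_n ↦ -(c_0 e_1 + c_1 e_2 + ⋯ + c_{n-1} e_n)`. -/
def companionMat (n : ℕ) (p : Polynomial ℤ) : Matrix (Fin n) (Fin n) ℤ :=
  Matrix.of fun i j =>
    if (j : ℕ) + 1 < n then (if (i : ℕ) = (j : ℕ) + 1 then 1 else 0) else -p.coeff (i : ℕ)

set_option maxHeartbeats 1000000 in
/-- for f = (x-1)⁶, g = (x+1)⁶ we have v = (-12, 0, -40, 0, -12, 0), every
coordinate of v is divisible by 4, hence for every γ in the group generated by A and B the
coefficient of e₆ in γ(v) is not in {1, -1, 2, -2}; in particular no γ in this group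
satisfies the hypotheses of the arithmeticity criterion. -/
theorem no_certificate_entry_one (f g : Polynomial ℤ)
    (hf : f = (Polynomial.X - 1) ^ 6)
    (hg : g = (Polynomial.X + 1) ^ 6)
    (A B : GL (Fin 6) ℤ)
    (hA : (A : Matrix (Fin 6) (Fin 6) ℤ) = companionMat 6 f)
    (hB : (B : Matrix (Fin 6) (Fin 6) ℤ) = companionMat 6 g)
    (v : Fin 6 → ℤ)
    (hv : v = ((A⁻¹ * B : GL (Fin 6) ℤ) : Matrix (Fin 6) (Fin 6) ℤ) *ᵥ
      Pi.single (5 : Fin 6) 1 - Pi.single (5 : Fin 6) 1) :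
    v = ![-12, 0, -40, 0, -12, 0] ∧
    (∀ i : Fin 6, (4 : ℤ) ∣ v i) ∧
    (∀ γ ∈ Subgroup.closure {A, B},
      ((γ : Matrix (Fin 6) (Fin 6) ℤ) *ᵥ v) 5 ∉ ({1, -1, 2, -2} : Set ℤ)) ∧
    ¬ ∃ γ ∈ Subgroup.closure {A, B},
      ((γ : Matrix (Fin 6) (Fin 6) ℤ) *ᵥ v) 5 ∈ ({1, -1, 2, -2} : Set ℤ) ∧
      LinearIndependent ℚ
        ![(fun i => (v i : ℚ)),
          (fun i => (((γ : Matrix (Fin 6) (Fin 6) ℤ) *ᵥ v) i : ℚ)),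
          (fun i => (((↑γ⁻¹ : Matrix (Fin 6) (Fin 6) ℤ) *ᵥ v) i : ℚ))] := by
  -- explicit forms of A and B
  have hA' : (A : Matrix (Fin 6) (Fin 6) ℤ) =
      !![0,0,0,0,0,-1; 1,0,0,0,0,6; 0,1,0,0,0,-15; 0,0,1,0,0,20; 0,0,0,1,0,-15; 0,0,0,0,1,6] := by
    have hf6 : f = X^6 + C (-6) * X^5 + C 15 * X^4 + C (-20) * X^3 + C 15 * X^2 + C (-6) * X + C 1 := by
      rw [hf]; simp only [map_neg, map_ofNat, Polynomial.C_1]; ring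
    rw [hA]
    ext i j
    fin_cases i <;> fin_cases j <;>
      norm_num [companionMat, hf6, coeff_add, coeff_C_mul, coeff_X_pow, coeff_C, coeff_one, coeff_X]
  have hB' : (B : Matrix (Fin 6) (Fin 6) ℤ) =
      !![0,0,0,0,0,-1; 1,0,0,0,0,-6; 0,1,0,0,0,-15; 0,0,1,0,0,-20; 0,0,0,1,0,-15; 0,0,0,0,1,-6] := by
    have hg6 : g = X^6 + C 6 * X^5 + C 15 * X^4 + C 20 * X^3 + C 15 * X^2 + C 6 * X + C 1 := by
      rw [hg]; simp only [map_ofNat, Polynomial.C_1]; ring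
    rw [hB]
    ext i j
    fin_cases i <;> fin_cases j <;>
      norm_num [companionMat, hg6, coeff_add, coeff_C_mul, coeff_X_pow, coeff_C, coeff_one, coeff_X]
  set e : Fin 6 → ℤ := Pi.single (5 : Fin 6) 1 with he
  set w : Fin 6 → ℤ := ![-12, 0, -40, 0, -12, 0] with hw
  -- A * (A⁻¹ * B) = B
  have hABu : (A : Matrix (Fin 6) (Fin 6) ℤ) * ((A⁻¹ * B : GL (Fin 6) ℤ) : Matrix (Fin 6) (Fin 6) ℤ)
      = (B : Matrix (Fin 6) (Fin 6) ℤ) := by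
    have : A * (A⁻¹ * B) = B := by group
    calc (A : Matrix (Fin 6) (Fin 6) ℤ) * ((A⁻¹ * B : GL (Fin 6) ℤ) : Matrix (Fin 6) (Fin 6) ℤ)
        = ((A * (A⁻¹ * B) : GL (Fin 6) ℤ) : Matrix (Fin 6) (Fin 6) ℤ) := rfl
      _ = (B : Matrix (Fin 6) (Fin 6) ℤ) := by rw [this]
  have h1 : (A : Matrix (Fin 6) (Fin 6) ℤ) *ᵥ (v + e) = (B : Matrix (Fin 6) (Fin 6) ℤ) *ᵥ e := by
    have hve : v + e = ((A⁻¹ * B : GL (Fin 6) ℤ) : Matrix (Fin 6) (Fin 6) ℤ) *ᵥ e := by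
      rw [hv]; abel
    rw [hve, Matrix.mulVec_mulVec, hABu]
  have h2 : (A : Matrix (Fin 6) (Fin 6) ℤ) *ᵥ (w + e) = (B : Matrix (Fin 6) (Fin 6) ℤ) *ᵥ e := by
    rw [hA', hB']; decide
  -- injectivity of mulVec by A
  have hinj : ∀ x y : Fin 6 → ℤ, (A : Matrix (Fin 6) (Fin 6) ℤ) *ᵥ x = (A : Matrix (Fin 6) (Fin 6) ℤ) *ᵥ y → x = y := by
    intro x y h
    have h' := congrArg (fun z => ((A⁻¹ : GL (Fin 6) ℤ) : Matrix (Fin 6) (Fin 6) ℤ) *ᵥ z) h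
    simp only [Matrix.mulVec_mulVec] at h'
    have hAA : ((A⁻¹ : GL (Fin 6) ℤ) : Matrix (Fin 6) (Fin 6) ℤ) * (A : Matrix (Fin 6) (Fin 6) ℤ)
        = (1 : Matrix (Fin 6) (Fin 6) ℤ) := by
      calc ((A⁻¹ : GL (Fin 6) ℤ) : Matrix (Fin 6) (Fin 6) ℤ) * (A : Matrix (Fin 6) (Fin 6) ℤ)
          = ((A⁻¹ * A : GL (Fin 6) ℤ) : Matrix (Fin 6) (Fin 6) ℤ) := rfl
        _ = ((1 : GL (Fin 6) ℤ) : Matrix (Fin 6) (Fin 6) ℤ) := by rw [inv_mul_cancel]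
        _ = 1 := rfl
    rwa [hAA, Matrix.one_mulVec, Matrix.one_mulVec] at h'
  have hvw : v = w := by
    have := hinj (v + e) (w + e) (h1.trans h2.symm)
    have h3 := congrArg (fun z => z - e) this
    simpa using h3
  refine ⟨hvw, ?_, ?_, ?_⟩
  · intro i; rw [hvw]; fin_cases i <;> decide
  · intro γ hγ hmem
    have hdvd : (4 : ℤ) ∣ ((γ : Matrix (Fin 6) (Fin 6) ℤ) *ᵥ v) 5 := by
      rw [hvw]
      simp only [Matrix.mulVec, dotProduct, Fin.sum_univ_six]
      have h0 : (w 0 = -12) ∧ (w 1 = 0) ∧ (w 2 = -40) ∧ (w 3 = 0) ∧ (w 4 = -12) ∧ (w 5 = 0) := by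
        refine ⟨rfl, rfl, rfl, rfl, rfl, rfl⟩
      obtain ⟨e0, e1, e2, e3, e4, e5⟩ := h0
      rw [e0, e1, e2, e3, e4, e5]
      omega
    simp only [Set.mem_insert_iff, Set.mem_singleton_iff] at hmem
    rcases hmem with h | h | h | h <;> omega
  · rintro ⟨γ, hγ, hmem, -⟩
    exact (by
      intro hmem'
      have hdvd : (4 : ℤ) ∣ ((γ : Matrix (Fin 6) (Fin 6) ℤ) *ᵥ v) 5 := by
        rw [hvw]
        simp only [Matrix.mulVec, dotProduct, Fin.sum_univ_six]
        have h0 : (w 0 = -12) ∧ (w 1 = 0) ∧ (w 2 = -40) ∧ (w 3 = 0) ∧ (w 4 = -12) ∧ (w 5 = 0) := by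
          refine ⟨rfl, rfl, rfl, rfl, rfl, rfl⟩
        obtain ⟨e0, e1, e2, e3, e4, e5⟩ := h0
        rw [e0, e1, e2, e3, e4, e5]
        omega
      simp only [Set.mem_insert_iff, Set.mem_singleton_iff] at hmem'
      rcases hmem' with h | h | h | h <;> omega : ((γ : Matrix (Fin 6) (Fin 6) ℤ) *ᵥ v) 5 ∉ ({1, -1, 2, -2} : Set ℤ)) hmem
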